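/- A point (u,v) ∈ (ℂ*)² is fixed by some nontrivial iterate of the monomial map associated to a matrix M ∈ GL₂(ℤ) whose eigenvalues have modulus ≠ 1 if and only if u and v are both roots of unity. -/

import Mathlib

open Polynomial

namespace MonomialAux

/-- The monomial map associated to an integer matrix. -/
def phi (A : Matrix (Fin 2) (Fin 2) ℤ) : ℂˣ × ℂˣ → ℂˣ × ℂˣ :=
  fun p => (p.1 ^ A 0 0 * p.2 ^ A 0 1, p.1 ^ A 1 0 * p.2 ^ A 1 1)

lemma aux_zpow (x y : ℂˣ) (a b e f g h : ℤ) :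
    (x^e*y^f)^a * (x^g*y^h)^b = x^(a*e+b*g) * y^(a*f+b*h) := by
  rw [mul_zpow, mul_zpow, ← zpow_mul, ← zpow_mul, ← zpow_mul, ← zpow_mul,
    mul_mul_mul_comm, ← zpow_add, ← zpow_add]
  ring_nf

lemma phi_comp (A B : Matrix (Fin 2) (Fin 2) ℤ) (p : ℂˣ × ℂˣ) :
    phi A (phi B p) = phi (A * B) p := by
  obtain ⟨x, y⟩ := p
  simp only [phi, Matrix.mul_apply, Fin.sum_univ_two, Prod.mk.injEq]
  exact ⟨aux_zpow x y _ _ _ _ _ _, aux_zpow x y _ _ _ _ _ _⟩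

lemma phi_one (p : ℂˣ × ℂˣ) : phi 1 p = p := by
  obtain ⟨x, y⟩ := p
  simp [phi, Matrix.one_apply]

lemma phi_iter (A : Matrix (Fin 2) (Fin 2) ℤ) (n : ℕ) (p : ℂˣ × ℂˣ) :
    (phi A)^[n] p = phi (A ^ n) p := by
  induction n with
  | zero => simp [phi_one]
  | succ n ih =>
      rw [Function.iterate_succ_apply', ih, phi_comp, ← pow_succ']

lemma phi_injective (A : Matrix (Fin 2) (Fin 2) ℤ) (hdet : A.det = 1 ∨ A.det = -1) :
    Function.Injective (phi A) := by
  have hdd : A.det * A.det = 1 := by rcases hdet with h | h <;> rw [h] <;> norm_num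
  have hinv : (A.det • A.adjugate) * A = 1 := by
    rw [Matrix.smul_mul, Matrix.adjugate_mul, smul_smul, hdd, one_smul]
  intro p q hpq
  have : phi (A.det • A.adjugate) (phi A p) = phi (A.det • A.adjugate) (phi A q) := by
    rw [hpq]
  rwa [phi_comp, phi_comp, hinv, phi_one, phi_one] at this

end MonomialAux

namespace MonomialAux

lemma pow_stable (m : ℕ) (x : ℂˣ) (a : ℤ) (h : x ^ m = 1) : (x ^ a) ^ m = 1 := by
  rw [← zpow_natCast (x ^ a) m, ← zpow_mul, mul_comm, zpow_mul, zpow_natCast, h, one_zpow]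

lemma phi_stable (A : Matrix (Fin 2) (Fin 2) ℤ) (m : ℕ) (p : ℂˣ × ℂˣ)
    (h1 : p.1 ^ m = 1) (h2 : p.2 ^ m = 1) :
    (phi A p).1 ^ m = 1 ∧ (phi A p).2 ^ m = 1 := by
  constructor <;>
    · show (_ * _) ^ m = 1
      rw [mul_pow, pow_stable m _ _ h1, pow_stable m _ _ h2, one_mul]

/-- Reverse direction: roots of unity are periodic. -/
lemma periodic_of_roots_of_unity (M : Matrix (Fin 2) (Fin 2) ℤ)
    (hdet : M.det = 1 ∨ M.det = -1) (u v : ℂˣ)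
    (k l : ℕ) (hk : 1 ≤ k) (hl : 1 ≤ l) (hu : u ^ k = 1) (hv : v ^ l = 1) :
    ∃ n : ℕ, 1 ≤ n ∧ (phi M)^[n] (u, v) = (u, v) := by
  set m := k * l with hm
  have hm1 : 1 ≤ m := Nat.one_le_iff_ne_zero.mpr (by positivity)
  have hum : u ^ m = 1 := by rw [hm, pow_mul, hu, one_pow]
  have hvm : v ^ m = 1 := by rw [hm, mul_comm, pow_mul, hv, one_pow]
  haveI : NeZero m := ⟨by omega⟩
  -- each iterate lies in the finite set rootsOfUnity m ℂ × rootsOfUnity m ℂ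
  have hmem : ∀ n : ℕ, ((phi M)^[n] (u, v)).1 ^ m = 1 ∧ ((phi M)^[n] (u, v)).2 ^ m = 1 := by
    intro n
    induction n with
    | zero => exact ⟨hum, hvm⟩
    | succ n ih =>
        rw [Function.iterate_succ_apply']
        exact phi_stable M m _ ih.1 ih.2
  let g : ℕ → (rootsOfUnity m ℂ) × (rootsOfUnity m ℂ) := fun n =>
    (⟨((phi M)^[n] (u, v)).1, (mem_rootsOfUnity m _).mpr (hmem n).1⟩,
     ⟨((phi M)^[n] (u, v)).2, (mem_rootsOfUnity m _).mpr (hmem n).2⟩)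
  obtain ⟨i, j, hij, hgij⟩ := Finite.exists_ne_map_eq_of_infinite g
  -- wlog i < j
  wlog hlt : i < j generalizing i j
  · exact this j i hij.symm hgij.symm (by omega)
  have heq : (phi M)^[i] (u, v) = (phi M)^[j] (u, v) := by
    have h1 := congrArg (fun q => ((q.1 : ℂˣ), (q.2 : ℂˣ))) hgij
    simp only [g] at h1
    exact Prod.ext (congrArg Prod.fst h1) (congrArg Prod.snd h1)
  refine ⟨j - i, by omega, ?_⟩
  have hinj : Function.Injective ((phi M)^[i]) :=
    Function.Injective.iterate (phi_injective M hdet) i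
  apply hinj
  rw [← Function.iterate_add_apply, Nat.add_comm i (j-i)]
  rw [Nat.sub_add_cancel (by omega)]
  exact heq.symm

end MonomialAux
namespace MonomialAux


lemma charpoly_eval (A : Matrix (Fin 2) (Fin 2) ℂ) (z : ℂ) :
    A.charpoly.eval z = (z • (1 : Matrix (Fin 2) (Fin 2) ℂ) - A).det := by
  have h : (evalRingHom z).mapMatrix (Matrix.charmatrix A) = z • 1 - A := by
    ext i j
    by_cases h : i = j
    · subst h
      simp [Matrix.charmatrix_apply_eq, Matrix.one_apply, Matrix.smul_apply]
    · simp [Matrix.charmatrix_apply_ne _ _ _ h, Matrix.one_apply_ne h, Matrix.smul_apply,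
        Matrix.sub_apply]
  have := (evalRingHom z).map_det (Matrix.charmatrix A)
  rw [h] at this
  exact this

lemma detC_ne (B : Matrix (Fin 2) (Fin 2) ℂ)
    (heig : ∀ z : ℂ, B.charpoly.IsRoot z → ‖z‖ ≠ 1)
    (n : ℕ) (hn : 1 ≤ n) : (B ^ n - 1).det ≠ 0 := by
  set p : ℂ[X] := X ^ n - C 1 with hp
  have hmonic : p.Monic := monic_X_pow_sub_C 1 (by omega)
  have hsplit : p.roots.card = p.natDegree := by
    rw [← splits_iff_card_roots]
    exact IsAlgClosed.splits p
  have hfac : (p.roots.map fun a => X - C a).prod = p := by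
    have := C_leadingCoeff_mul_prod_multiset_X_sub_C hsplit
    rwa [hmonic.leadingCoeff, map_one, one_mul] at this
  set l : List ℂ := p.roots.toList with hl
  have hfacl : (l.map fun a => X - C a).prod = p := by
    rw [← hfac]
    conv_rhs => rw [← Multiset.coe_toList p.roots]
    rw [Multiset.map_coe, Multiset.prod_coe]
  have haeval : B ^ n - 1 = (l.map fun a => B - a • 1).prod := by
    have h1 : aeval B p = B ^ n - 1 := by simp [hp]
    have h2 : aeval B ((l.map fun a => X - C a).prod)
        = (l.map fun a => B - a • 1).prod := by
      rw [map_list_prod]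
      congr 1
      rw [List.map_map]
      refine List.map_congr_left fun a _ => ?_
      simp [Algebra.algebraMap_eq_smul_one]
    rw [← h1, ← hfacl, h2]
  have hdet : (B ^ n - 1).det = ((l.map fun a => B - a • 1).map Matrix.det).prod := by
    rw [haeval, ← Matrix.coe_detMonoidHom, map_list_prod (Matrix.detMonoidHom (n := Fin 2) (R := ℂ))]
  rw [hdet, List.map_map]
  intro h0
  rw [List.prod_eq_zero_iff] at h0
  rw [List.mem_map] at h0
  obtain ⟨z, hz, hdet0⟩ := h0
  have hzroots : z ∈ p.roots := by rwa [hl, Multiset.mem_toList] at hz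
  have hzn : z ^ n = 1 := by
    have := isRoot_of_mem_roots hzroots
    simpa [hp, sub_eq_zero] using this
  have habs : ‖z‖ = 1 := by
    have h1 : ‖z‖ ^ n = 1 := by
      rw [← norm_pow, hzn, norm_one]
    have h0' : 0 ≤ ‖z‖ := norm_nonneg z
    rcases lt_trichotomy (‖z‖) 1 with h | h | h
    · have := pow_lt_one₀ h0' h (by omega : n ≠ 0)
      rw [h1] at this; exact absurd this (lt_irrefl 1)
    · exact h
    · have := one_lt_pow₀ h (by omega : n ≠ 0)
      rw [h1] at this; exact absurd this (lt_irrefl 1)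
  have hroot : B.charpoly.IsRoot z := by
    have hneg : z • (1 : Matrix (Fin 2) (Fin 2) ℂ) - B = -(B - z • 1) := (neg_sub _ _).symm
    have : (z • (1 : Matrix (Fin 2) (Fin 2) ℂ) - B).det = 0 := by
      rw [hneg, Matrix.det_neg]
      simp only [Function.comp_apply] at hdet0
      simp [hdet0]
    rw [IsRoot, charpoly_eval, this]
  exact heig z hroot habs

lemma detZ_ne (M : Matrix (Fin 2) (Fin 2) ℤ)
    (heig : ∀ z : ℂ, ((M.map (Int.cast : ℤ → ℂ)).charpoly).IsRoot z → ‖z‖ ≠ 1)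
    (n : ℕ) (hn : 1 ≤ n) : ((M ^ n - 1 : Matrix (Fin 2) (Fin 2) ℤ)).det ≠ 0 := by
  intro h
  have hcast : (((M ^ n - 1 : Matrix (Fin 2) (Fin 2) ℤ)).det : ℂ)
      = ((M.map (Int.cast : ℤ → ℂ)) ^ n - 1).det := by
    have h2 := (Int.castRingHom ℂ).map_det (M ^ n - 1)
    rw [map_sub, map_pow, map_one] at h2
    rw [RingHom.mapMatrix_apply] at h2
    exact h2
  have := detC_ne (M.map (Int.cast : ℤ → ℂ)) heig n hn
  rw [← hcast, h] at this
  simp at this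

lemma zkey (u v : ℂˣ) (a b c d : ℤ) (h1 : u^a * v^b = 1) (h2 : u^c * v^d = 1) :
    u ^ (a*d - b*c) = 1 ∧ v ^ (a*d - b*c) = 1 := by
  constructor
  · have h := aux_zpow u v d (-b) a b c d
    rw [h1, h2, one_zpow, one_zpow, one_mul] at h
    have e2 : d*b + (-b)*d = 0 := by ring
    rw [e2, zpow_zero, mul_one] at h
    have e1 : a*d - b*c = d*a + (-b)*c := by ring
    rw [e1]; exact h.symm
  · have h := aux_zpow u v (-c) a a b c d
    rw [h1, h2, one_zpow, one_zpow, one_mul] at h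
    have e2 : (-c)*a + a*c = 0 := by ring
    rw [e2, zpow_zero, one_mul] at h
    have e1 : a*d - b*c = (-c)*b + a*d := by ring
    rw [e1]; exact h.symm

lemma exists_pow_eq_one (u : ℂˣ) (D : ℤ) (hD : D ≠ 0) (h : u ^ D = 1) :
    ∃ k : ℕ, 1 ≤ k ∧ u ^ k = 1 := by
  refine ⟨D.natAbs, by omega, ?_⟩
  rw [← zpow_natCast]
  rcases Int.natAbs_eq D with he | he
  · rw [← he, h]
  · rw [← neg_neg (D.natAbs : ℤ), ← he, zpow_neg, h, inv_one]

lemma roots_of_unity_of_periodic (M : Matrix (Fin 2) (Fin 2) ℤ)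
    (heig : ∀ z : ℂ, ((M.map (Int.cast : ℤ → ℂ)).charpoly).IsRoot z → ‖z‖ ≠ 1)
    (u v : ℂˣ) (n : ℕ) (hn : 1 ≤ n) (hfix : (phi M)^[n] (u, v) = (u, v)) :
    (∃ k : ℕ, 1 ≤ k ∧ u ^ k = 1) ∧ (∃ k : ℕ, 1 ≤ k ∧ v ^ k = 1) := by
  rw [phi_iter] at hfix
  set N := M ^ n with hN
  have hc1 : u ^ N 0 0 * v ^ N 0 1 = u := congrArg Prod.fst hfix
  have hc2 : u ^ N 1 0 * v ^ N 1 1 = v := congrArg Prod.snd hfix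
  have h1 : u ^ (N 0 0 - 1) * v ^ (N 0 1) = 1 := by
    rw [zpow_sub, zpow_one, mul_right_comm, hc1, mul_inv_cancel]
  have h2 : u ^ (N 1 0) * v ^ (N 1 1 - 1) = 1 := by
    rw [zpow_sub, zpow_one, ← mul_assoc, hc2, mul_inv_cancel]
  obtain ⟨hu, hv⟩ := zkey u v (N 0 0 - 1) (N 0 1) (N 1 0) (N 1 1 - 1) h1 h2
  have hDdet : (N 0 0 - 1) * (N 1 1 - 1) - N 0 1 * N 1 0 = (N - 1).det := by
    simp [Matrix.det_fin_two, Matrix.sub_apply, Matrix.one_apply]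
  have hD : (N 0 0 - 1) * (N 1 1 - 1) - N 0 1 * N 1 0 ≠ 0 := by
    rw [hDdet, hN]
    exact detZ_ne M heig n hn
  exact ⟨exists_pow_eq_one u _ hD hu, exists_pow_eq_one v _ hD hv⟩

end MonomialAux


/-- A point (u,v) ∈ (ℂ*)² is periodic for the monomial map of a matrix M ∈ GL₂(ℤ)
with no eigenvalue of modulus 1 if and only if u and v are roots of unity. -/
theorem monomial_periodic_iff_roots_of_unity (M : Matrix (Fin 2) (Fin 2) ℤ)
    (hdet : M.det = 1 ∨ M.det = -1)
    (heig : ∀ z : ℂ, ((M.map (Int.cast : ℤ → ℂ)).charpoly).IsRoot z → ‖z‖ ≠ 1)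
    (u v : ℂˣ) :
    (∃ n : ℕ, 1 ≤ n ∧
        (fun p : ℂˣ × ℂˣ =>
            (p.1 ^ M 0 0 * p.2 ^ M 0 1, p.1 ^ M 1 0 * p.2 ^ M 1 1))^[n] (u, v) = (u, v)) ↔
      ((∃ k : ℕ, 1 ≤ k ∧ u ^ k = 1) ∧ (∃ k : ℕ, 1 ≤ k ∧ v ^ k = 1)) := by
  have hphi : (fun p : ℂˣ × ℂˣ =>
      (p.1 ^ M 0 0 * p.2 ^ M 0 1, p.1 ^ M 1 0 * p.2 ^ M 1 1)) = MonomialAux.phi M := rfl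
  rw [hphi]
  constructor
  · rintro ⟨n, hn, hfix⟩
    exact MonomialAux.roots_of_unity_of_periodic M heig u v n hn hfix
  · rintro ⟨⟨k, hk, hu⟩, ⟨l, hl, hv⟩⟩
    exact MonomialAux.periodic_of_roots_of_unity M hdet u v k l hk hl hu hv
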